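/- Assume that for every ε > 0 there exists D_ε such that every real quadratic field discriminant D > D_ε admits an odd prime p with (D/p) = 1 and (1/2)√D ≤ p ≤ (1/2 + ε)√D. Then limsup_{D→∞} H_min(D)/√D ≤ 1/2, where D runs through the discriminants of real quadratic fields; that is, for every ε > 0 there is a bound B such that every real quadratic field discriminant D > B satisfies H_min(D)/√D ≤ 1/2 + ε. -/

import Mathlib

open NumberField IntermediateField

-- Step 1: basis of O_K of the form (1, ω)
lemma exists_basis_one (K : Type) [Field K] [NumberField K]
    (h2 : Module.finrank ℚ K = 2) :
    ∃ b : Module.Basis (Fin 2) ℤ (𝓞 K), b 0 = 1 := by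
  have hrk : Module.finrank ℤ (𝓞 K) = 2 := by
    rw [NumberField.RingOfIntegers.rank]; exact h2
  -- get a Fin 2 basis
  obtain ⟨e⟩ : Nonempty (Module.Basis (Fin 2) ℤ (𝓞 K)) := by
    have e0 := Module.Free.chooseBasis ℤ (𝓞 K)
    have hcard : Fintype.card (Module.Free.ChooseBasisIndex ℤ (𝓞 K)) = 2 := by
      rw [← Module.finrank_eq_card_chooseBasisIndex]; exact hrk
    exact ⟨e0.reindex (Fintype.equivFinOfCardEq hcard)⟩
  set a : ℤ := e.repr 1 0 with ha
  set b : ℤ := e.repr 1 1 with hb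
  have h1 : a • e 0 + b • e 1 = (1 : 𝓞 K) := by
    have := e.sum_repr 1
    rwa [Fin.sum_univ_two] at this
  -- coprimality
  have hgcd : IsCoprime a b := by
    rw [Int.isCoprime_iff_gcd_eq_one]
    set g : ℕ := Int.gcd a b with hg
    obtain ⟨a', ha'⟩ : (g : ℤ) ∣ a := Int.gcd_dvd_left a b
    obtain ⟨b', hb'⟩ : (g : ℤ) ∣ b := Int.gcd_dvd_right a b
    set z : 𝓞 K := a' • e 0 + b' • e 1 with hz
    have hgz : ((g : ℤ) : 𝓞 K) * z = 1 := by
      rw [← h1, ha', hb', hz]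
      rw [mul_add, ← zsmul_eq_mul, smul_smul, ← zsmul_eq_mul, smul_smul]
    have hK : ((g : ℤ) : K) * (algebraMap (𝓞 K) K z) = 1 := by
      have := congrArg (algebraMap (𝓞 K) K) hgz
      rw [map_mul, map_one, map_intCast] at this
      exact this
    have hg0 : (g : ℚ) ≠ 0 := by
      rintro h
      norm_cast at h
      rw [h] at hK; push_cast at hK; simp at hK
    have hzq : algebraMap (𝓞 K) K z = algebraMap ℚ K ((g : ℚ)⁻¹) := by
      have h2' : algebraMap (𝓞 K) K z = (((g : ℤ) : K))⁻¹ := eq_inv_of_mul_eq_one_left (by rw [mul_comm]; exact hK)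
      rw [h2', map_inv₀]
      push_cast
      rfl
    have hint : IsIntegral ℤ ((g : ℚ)⁻¹) := by
      rw [← isIntegral_algebraMap_iff (algebraMap ℚ K).injective, ← hzq]
      exact NumberField.RingOfIntegers.isIntegral_coe z
    obtain ⟨m, hm⟩ := IsIntegrallyClosed.isIntegral_iff.mp hint
    have hq : (g : ℚ) * (m : ℚ) = 1 := by
      rw [show ((m : ℚ)) = (g:ℚ)⁻¹ from hm]
      field_simp
    have hZ : (g : ℤ) * m = 1 := by exact_mod_cast hq
    have := Int.eq_one_of_mul_eq_one_right (by positivity) hZ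
    exact_mod_cast this
  obtain ⟨xx, yy, hxy⟩ := hgcd
  set u : ℤ := -yy with hu
  set v : ℤ := xx with hv
  have hdet : a * v - b * u = 1 := by rw [hu, hv]; linear_combination hxy
  set ω : 𝓞 K := u • e 0 + v • e 1 with hω
  have li : LinearIndependent ℤ ![(1 : 𝓞 K), ω] := by
    rw [LinearIndependent.pair_iff]
    intro m n hmn
    have h0 : (m * a + n * u) • e 0 + (m * b + n * v) • e 1 = (0 : 𝓞 K) := by
      rw [← hmn, ← h1, hω]; module
    have c0 : m * a + n * u = 0 := by
      have := congrArg (fun w => e.repr w 0) h0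
      simp only [map_add, LinearEquiv.map_smul, Module.Basis.repr_self, Finsupp.add_apply,
        Finsupp.smul_apply, Finsupp.single_apply, map_zero, Finsupp.coe_zero,
        Pi.zero_apply] at this
      simpa using this
    have c1 : m * b + n * v = 0 := by
      have := congrArg (fun w => e.repr w 1) h0
      simp only [map_add, LinearEquiv.map_smul, Module.Basis.repr_self, Finsupp.add_apply,
        Finsupp.smul_apply, Finsupp.single_apply, map_zero, Finsupp.coe_zero,
        Pi.zero_apply] at this
      simpa using this
    constructor
    · linear_combination v * c0 - u * c1 - m * hdet
    · linear_combination a * c1 - b * c0 - n * hdet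
  have hsp : ⊤ ≤ Submodule.span ℤ (Set.range ![(1 : 𝓞 K), ω]) := by
    rw [← e.span_eq]
    refine Submodule.span_le.mpr ?_
    have h1mem : (1 : 𝓞 K) ∈ Submodule.span ℤ (Set.range ![(1 : 𝓞 K), ω]) :=
      Submodule.subset_span ⟨0, rfl⟩
    have hωmem : ω ∈ Submodule.span ℤ (Set.range ![(1 : 𝓞 K), ω]) :=
      Submodule.subset_span ⟨1, rfl⟩
    rintro w ⟨i, rfl⟩
    have hi : i = 0 ∨ i = 1 := by omega
    rcases hi with rfl | rfl
    · have he0 : (1 : ℤ) • e 0 = v • (1 : 𝓞 K) - b • ω := by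
        rw [← hdet, ← h1, hω]; module
      rw [one_smul] at he0
      rw [he0]
      exact Submodule.sub_mem _ (Submodule.smul_mem _ _ h1mem) (Submodule.smul_mem _ _ hωmem)
    · have he1 : (1 : ℤ) • e 1 = (-u) • (1 : 𝓞 K) + a • ω := by
        rw [← hdet, ← h1, hω]; module
      rw [one_smul] at he1
      rw [he1]
      exact Submodule.add_mem _ (Submodule.smul_mem _ _ h1mem) (Submodule.smul_mem _ _ hωmem)
  refine ⟨Module.Basis.mk li hsp, ?_⟩
  rw [Module.Basis.coe_mk]; rfl

-- Step 2: square root of the discriminant and Stickelberger mod 4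
lemma exists_sqrt_discr (K : Type) [Field K] [NumberField K]
    (h2 : Module.finrank ℚ K = 2) :
    ∃ (s : K) (x y : ℤ), s ∉ (⊥ : IntermediateField ℚ K) ∧
      s ^ 2 = ((NumberField.discr K : ℤ) : K) ∧
      NumberField.discr K = 4 * x + y ^ 2 := by
  obtain ⟨b, hb0⟩ := exists_basis_one K h2
  have hrk : Module.finrank ℤ (𝓞 K) = 2 := by
    rw [NumberField.RingOfIntegers.rank]; exact h2
  set ω : 𝓞 K := b 1 with hω
  set x : ℤ := b.repr (ω ^ 2) 0 with hx
  set y : ℤ := b.repr (ω ^ 2) 1 with hy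
  have hω2 : ω ^ 2 = x • b 0 + y • b 1 := by
    have := b.sum_repr (ω ^ 2)
    rw [Fin.sum_univ_two] at this
    exact this.symm
  have hω2' : ω ^ 2 = (x : 𝓞 K) + (y : 𝓞 K) * ω := by
    rw [hω2, hb0, ← hω]
    rw [zsmul_eq_mul, zsmul_eq_mul, mul_one]
  -- traces
  have htr1 : Algebra.trace ℤ (𝓞 K) 1 = 2 := by
    have := Algebra.trace_algebraMap (R := ℤ) (S := 𝓞 K) 1
    rw [map_one] at this
    rw [this, hrk]; simp
  have htrω : Algebra.trace ℤ (𝓞 K) ω = y := by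
    rw [Algebra.trace_eq_matrix_trace b ω, Matrix.trace_fin_two]
    rw [Algebra.leftMulMatrix_eq_repr_mul, Algebra.leftMulMatrix_eq_repr_mul]
    rw [hb0, mul_one, ← hω]
    have h00 : b.repr ω 0 = 0 := by
      rw [hω, b.repr_self]; simp
    rw [h00, ← pow_two, ← hy, zero_add]
  have htrω2 : Algebra.trace ℤ (𝓞 K) (ω ^ 2) = 2 * x + y * y := by
    rw [hω2', map_add]
    have e1 : Algebra.trace ℤ (𝓞 K) ((x : 𝓞 K)) = 2 * x := by
      have := Algebra.trace_algebraMap (R := ℤ) (S := 𝓞 K) x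
      have hmap : (algebraMap ℤ (𝓞 K)) x = (x : 𝓞 K) := by simp
      rw [hmap] at this
      rw [this, hrk]
      simp [nsmul_eq_mul]
    have e2 : Algebra.trace ℤ (𝓞 K) ((y : 𝓞 K) * ω) = y * y := by
      rw [← zsmul_eq_mul, map_smul, htrω, smul_eq_mul]
    rw [e1, e2]
  have hdiscr : NumberField.discr K = 4 * x + y ^ 2 := by
    rw [← NumberField.discr_eq_discr K b]
    rw [Algebra.discr_def, Matrix.det_fin_two]
    simp only [Algebra.traceMatrix_apply, Algebra.traceForm_apply, hb0, one_mul, mul_one,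
      ← hω, ← pow_two, one_pow, htr1, htrω, htrω2]
    ring
  -- the square root
  set σ : 𝓞 K := 2 * ω - (y : 𝓞 K) with hσdef
  have hσ : σ ^ 2 = ((4 * x + y ^ 2 : ℤ) : 𝓞 K) := by
    push_cast
    linear_combination (4 : 𝓞 K) * hω2'
  refine ⟨algebraMap (𝓞 K) K σ, x, y, ?_, ?_, hdiscr⟩
  · -- not in ⊥
    intro hmem
    rw [IntermediateField.mem_bot] at hmem
    obtain ⟨q, hq⟩ := hmem
    have hq2 : algebraMap ℚ K q = 2 * algebraMap (𝓞 K) K ω - (y : K) := by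
      rw [hq, hσdef, map_sub, map_mul, map_intCast, map_ofNat]
    have hωK : algebraMap (𝓞 K) K ω = algebraMap ℚ K ((q + (y : ℚ)) / 2) := by
      rw [map_div₀, map_add, map_intCast, map_ofNat, eq_div_iff (two_ne_zero (α := K))]
      linear_combination -hq2
    have hint : IsIntegral ℤ ((q + (y : ℚ)) / 2) := by
      rw [← isIntegral_algebraMap_iff (algebraMap ℚ K).injective, ← hωK]
      exact NumberField.RingOfIntegers.isIntegral_coe ω
    obtain ⟨m, hm⟩ := IsIntegrallyClosed.isIntegral_iff.mp hint
    have hωm : algebraMap (𝓞 K) K ω = algebraMap (𝓞 K) K ((m : ℤ) : 𝓞 K) := by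
      rw [hωK, ← hm]
      simp
    have hωm' : ω = ((m : ℤ) : 𝓞 K) := NumberField.RingOfIntegers.coe_injective hωm
    have hcontra : (1 : ℤ) = 0 := by
      have e1 : b.repr (b 1) 1 = 1 := by rw [b.repr_self]; simp
      have e2 : b.repr (((m : ℤ) : 𝓞 K)) 1 = 0 := by
        have : ((m : ℤ) : 𝓞 K) = (m : ℤ) • b 0 := by
          rw [hb0, zsmul_eq_mul, mul_one]
        rw [this, map_smul, b.repr_self]
        simp [Finsupp.single_apply]
      rw [← e1, ← hω, hωm', e2]
    norm_num at hcontra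
  · rw [hdiscr, ← map_pow, hσ]
    simp only [map_intCast]

-- Step 3: arithmetic: finding b with b² ≡ D mod 4p and |b| ≤ p
lemma exists_good_b (p : ℕ) (hp : p.Prime) (hodd : Odd p) (D y : ℤ)
    (hleg : @legendreSym p ⟨hp⟩ D = 1) (h4 : (4 : ℤ) ∣ D - y ^ 2) :
    ∃ b : ℤ, |b| ≤ (p : ℤ) ∧ (4 * (p : ℤ)) ∣ b ^ 2 - D ∧ ¬ ((p : ℤ) ∣ D) := by
  haveI : Fact p.Prime := ⟨hp⟩
  have hD0 : (D : ZMod p) ≠ 0 := by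
    intro h
    rw [← legendreSym.eq_zero_iff p D] at h
    rw [h] at hleg
    norm_num at hleg
  have hpD : ¬ ((p : ℤ) ∣ D) := by
    intro h
    exact hD0 ((ZMod.intCast_zmod_eq_zero_iff_dvd D p).mpr h)
  have hsq : IsSquare ((D : ℤ) : ZMod p) := (legendreSym.eq_one_iff p hD0).mp hleg
  obtain ⟨r, hr⟩ := hsq
  set b₀ : ℤ := (r.val : ℤ) with hb₀
  have hb₀r : ((b₀ : ℤ) : ZMod p) = r := by
    rw [hb₀]
    push_cast
    simp [ZMod.natCast_val, ZMod.cast_id]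
  have hpb₀ : (p : ℤ) ∣ b₀ ^ 2 - D := by
    rw [← ZMod.intCast_zmod_eq_zero_iff_dvd]
    push_cast
    rw [hb₀r, hr]
    ring
  -- parity adjustment
  obtain ⟨k, hk⟩ := hodd
  set b₁ : ℤ := if (2 : ℤ) ∣ (b₀ - y) then b₀ else b₀ + p with hb₁
  have hb₁2 : (2 : ℤ) ∣ (b₁ - y) := by
    rw [hb₁]
    split_ifs with h
    · exact h
    · have : ¬ (2 : ℤ) ∣ (b₀ - y) := h
      omega
  have hb₁p : (p : ℤ) ∣ (b₁ - b₀) := by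
    rw [hb₁]; split_ifs with h
    · simp
    · simp
  have hppos : (0 : ℤ) < 2 * p := by
    have := hp.pos
    positivity
  set b : ℤ := (b₁ + p) % (2 * p) - p with hb
  have hmod1 : 0 ≤ (b₁ + p) % (2 * p) := Int.emod_nonneg _ (by omega)
  have hmod2 : (b₁ + p) % (2 * p) < 2 * p := Int.emod_lt_of_pos _ hppos
  have habs : |b| ≤ (p : ℤ) := by rw [abs_le]; omega
  have hbb₁ : (2 * (p : ℤ)) ∣ (b - b₁) := by
    refine ⟨-((b₁ + p) / (2 * p)), ?_⟩
    rw [hb, Int.emod_def]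
    ring
  have hb2 : (2 : ℤ) ∣ (b - y) := by
    have h1 : (2 : ℤ) ∣ (b - b₁) := dvd_trans ⟨(p : ℤ), rfl⟩ hbb₁
    omega
  have hbp : (p : ℤ) ∣ (b - b₀) := by
    have h1 : (p : ℤ) ∣ (b - b₁) := dvd_trans ⟨2, by ring⟩ hbb₁
    have := dvd_add h1 hb₁p
    simpa using this
  -- mod 4
  have h4b : (4 : ℤ) ∣ b ^ 2 - D := by
    have h4' : (4 : ℤ) ∣ b ^ 2 - y ^ 2 := by
      obtain ⟨t, ht⟩ := hb2
      refine ⟨t * (t + y), ?_⟩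
      have hby : b = y + 2 * t := by omega
      rw [hby]; ring
    omega
  -- mod p
  have hpb : (p : ℤ) ∣ b ^ 2 - D := by
    have h1 : (p : ℤ) ∣ b ^ 2 - b₀ ^ 2 := by
      obtain ⟨t, ht⟩ := hbp
      refine ⟨t * (b + b₀), ?_⟩
      have : b = b₀ + p * t := by omega
      rw [this]; ring
    have := dvd_add h1 hpb₀
    simpa using this
  -- combine
  have hcop : IsCoprime (4 : ℤ) (p : ℤ) := by
    have h2 : IsCoprime (2 : ℤ) (p : ℤ) := by
      rw [Int.prime_two.coprime_iff_not_dvd]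
      have hk' : (p : ℤ) = 2 * k + 1 := by exact_mod_cast hk
      omega
    have := h2.mul_left h2
    norm_num at this
    exact this
  exact ⟨b, habs, by rw [show (4 : ℤ) * p = 4 * p from rfl]; exact hcop.mul_dvd h4b hpb, hpD⟩

-- Step 4: an irrational element generates a quadratic field
lemma adjoin_eq_top_of_not_mem_bot (K : Type) [Field K] [NumberField K]
    (h2 : Module.finrank ℚ K = 2) {x : K}
    (hx : x ∉ (⊥ : IntermediateField ℚ K)) : ℚ⟮x⟯ = ⊤ := by
  set E := ℚ⟮x⟯ with hE
  have hne : E ≠ ⊥ := by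
    intro h
    exact hx (h ▸ IntermediateField.mem_adjoin_simple_self ℚ x)
  have hd : Module.finrank ℚ E * Module.finrank E K = 2 := by
    rw [Module.finrank_mul_finrank]; exact h2
  have h1 : Module.finrank ℚ E ≠ 1 := fun h =>
    hne (IntermediateField.finrank_eq_one_iff.mp h)
  have hdvd : Module.finrank ℚ E ∣ 2 := ⟨_, hd.symm⟩
  have hE2 : Module.finrank ℚ E = 2 := by
    rcases (Nat.prime_two.eq_one_or_self_of_dvd _ hdvd) with h | h
    · exact absurd h h1
    · exact h
  have ht : E.toSubmodule = ⊤ := by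
    apply Submodule.eq_top_of_finrank_eq
    rw [h2]
    exact hE2
  ext z
  simp only [IntermediateField.mem_top, iff_true]
  have hz : z ∈ E.toSubmodule := by rw [ht]; trivial
  exact hz

/-- Assume that for every `ε > 0` there is `D_ε` such that every real
quadratic field discriminant `D > D_ε` admits an odd prime `p` with `(D/p) = 1` and
`(1/2)√D ≤ p ≤ (1/2 + ε)√D`. Then `limsup_{D→∞} H_min(D)/√D ≤ 1/2`: for every `ε > 0`
there is `B` such that every real quadratic field of discriminant `D > B` has a
generator `α` (with primitive minimal polynomial `a·x² + b·x + c`) with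
`H(α) ≤ (1/2 + ε)·√D`. -/
theorem Hmin_real_quadratic_limsup_le_half
    (hyp : ∀ ε : ℝ, 0 < ε → ∃ Dε : ℝ,
      ∀ (K : Type) [Field K] [NumberField K],
        Module.finrank ℚ K = 2 → 0 < NumberField.discr K →
        (NumberField.discr K : ℝ) > Dε →
        ∃ (p : ℕ) (hp : p.Prime), Odd p ∧
          @legendreSym p ⟨hp⟩ (NumberField.discr K) = 1 ∧
          (1 / 2) * Real.sqrt (NumberField.discr K : ℝ) ≤ (p : ℝ) ∧
          (p : ℝ) ≤ (1 / 2 + ε) * Real.sqrt (NumberField.discr K : ℝ)) :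
    ∀ ε : ℝ, 0 < ε → ∃ B : ℝ,
      ∀ (K : Type) [Field K] [NumberField K],
        Module.finrank ℚ K = 2 → 0 < NumberField.discr K →
        (NumberField.discr K : ℝ) > B →
        ∃ (α : K) (a b c : ℤ), ℚ⟮α⟯ = ⊤ ∧
          (a : K) * α ^ 2 + (b : K) * α + (c : K) = 0 ∧
          Int.gcd (Int.gcd a b) c = 1 ∧
          ((max |a| (max |b| |c|) : ℤ) : ℝ) ≤
            (1 / 2 + ε) * Real.sqrt (NumberField.discr K : ℝ) := by
  intro ε hε
  obtain ⟨Dε, hDε⟩ := hyp ε hε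
  refine ⟨Dε, ?_⟩
  intro K _ _ h2 hpos hgt
  set D : ℤ := NumberField.discr K with hD
  obtain ⟨p, hp, hodd, hleg, hp1, hp2⟩ := hDε K h2 hpos hgt
  obtain ⟨s, x, y, hsnb, hs2, hDeq⟩ := exists_sqrt_discr K h2
  have h4 : (4 : ℤ) ∣ D - y ^ 2 := ⟨x, by rw [← hD] at hDeq; rw [hDeq]; ring⟩
  obtain ⟨b, habs, hdvd, hpD⟩ := exists_good_b p hp hodd D y hleg h4
  set a : ℤ := (p : ℤ) with ha
  set c : ℤ := (b ^ 2 - D) / (4 * (p : ℤ)) with hcdef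
  have hc : 4 * (p : ℤ) * c = b ^ 2 - D := Int.mul_ediv_cancel' hdvd
  -- reals
  have hDpos : (0 : ℝ) < (D : ℝ) := by exact_mod_cast hpos
  have hsq0 : (0 : ℝ) < Real.sqrt (D : ℝ) := Real.sqrt_pos.mpr hDpos
  have hsqD : Real.sqrt (D : ℝ) * Real.sqrt (D : ℝ) = (D : ℝ) :=
    Real.mul_self_sqrt (le_of_lt hDpos)
  have hppos : (0 : ℝ) < (p : ℝ) := by exact_mod_cast hp.pos
  -- α
  have hpK : ((p : ℕ) : K) ≠ 0 := Nat.cast_ne_zero.mpr hp.pos.ne'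
  have h2p : (2 * (p : K)) ≠ 0 := mul_ne_zero two_ne_zero hpK
  set α : K := (s - (b : K)) / (2 * (p : K)) with hα
  have hsD : s ^ 2 = (D : K) := hs2
  have hcK : 4 * (p : K) * (c : K) = (b : K) ^ 2 - (D : K) := by
    exact_mod_cast congrArg (fun t : ℤ => (t : K)) hc
  refine ⟨α, a, b, c, ?_, ?_, ?_, ?_⟩
  · -- generator
    apply adjoin_eq_top_of_not_mem_bot K h2
    intro hmem
    apply hsnb
    have hsval : s = 2 * (p : K) * α + (b : K) := by
      rw [hα]; field_simp; ring
    rw [hsval]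
    have h1 : (2 * (p : K)) ∈ (⊥ : IntermediateField ℚ K) := by
      rw [IntermediateField.mem_bot]
      exact ⟨2 * p, by simp⟩
    have hbb : ((b : ℤ) : K) ∈ (⊥ : IntermediateField ℚ K) := by
      rw [IntermediateField.mem_bot]
      exact ⟨(b : ℚ), by simp⟩
    exact add_mem (mul_mem h1 hmem) hbb
  · -- equation
    rw [hα, ha]
    have : (((p : ℤ) : K)) = (p : K) := by push_cast; rfl
    rw [this]
    field_simp
    linear_combination hsD + hcK
  · -- gcd
    have hG1 : ((Int.gcd (Int.gcd a b) c : ℕ) : ℤ) ∣ (Int.gcd a b : ℤ) := Int.gcd_dvd_left _ _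
    have hGc : ((Int.gcd (Int.gcd a b) c : ℕ) : ℤ) ∣ c := Int.gcd_dvd_right _ _
    have hGa : ((Int.gcd (Int.gcd a b) c : ℕ) : ℤ) ∣ a := dvd_trans hG1 (Int.gcd_dvd_left _ _)
    have hGb : ((Int.gcd (Int.gcd a b) c : ℕ) : ℤ) ∣ b := dvd_trans hG1 (Int.gcd_dvd_right _ _)
    have hGp : (Int.gcd (Int.gcd a b) c) ∣ p := by
      rw [ha] at hGa
      exact_mod_cast hGa
    rcases (Nat.Prime.eq_one_or_self_of_dvd hp _ hGp) with h | h
    · exact h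
    · exfalso
      apply hpD
      rw [h] at hGb hGc
      have hD' : D = b ^ 2 - 4 * (p : ℤ) * c := by linarith [hc]
      rw [hD']
      refine dvd_sub ?_ ⟨4 * c, by ring⟩
      rw [pow_two]
      exact hGb.mul_right b
  · -- bounds
    rw [Int.cast_max, Int.cast_max]
    have hbR : |(b : ℝ)| ≤ (p : ℝ) := by exact_mod_cast habs
    refine max_le ?_ (max_le ?_ ?_)
    · have : (|a| : ℤ) = (p : ℤ) := by rw [ha]; exact abs_of_nonneg (by positivity)
      rw [this]
      push_cast
      exact hp2
    · rw [Int.cast_abs]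
      linarith [hbR, hp2]
    · rw [Int.cast_abs]
      have hcR : 4 * (p : ℝ) * (c : ℝ) = (b : ℝ) ^ 2 - (D : ℝ) := by
        exact_mod_cast congrArg (fun t : ℤ => (t : ℝ)) hc
      rcases le_or_gt ((b : ℝ) ^ 2) ((D : ℝ)) with hcase | hcase
      · have h1 : |(c : ℝ)| * (4 * (p : ℝ)) ≤ (D : ℝ) := by
          calc |(c : ℝ)| * (4 * (p : ℝ)) = |(c : ℝ) * (4 * (p : ℝ))| := by
                rw [abs_mul, abs_of_pos (by positivity : (0:ℝ) < 4 * (p : ℝ))]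
            _ = |(b : ℝ) ^ 2 - (D : ℝ)| := by
                rw [show (c : ℝ) * (4 * (p : ℝ)) = 4 * (p : ℝ) * (c : ℝ) from by ring, hcR]
            _ = (D : ℝ) - (b : ℝ) ^ 2 := by
                rw [abs_sub_comm, abs_of_nonneg (by linarith)]
            _ ≤ (D : ℝ) := by nlinarith [sq_nonneg (b : ℝ)]
        have key : |(c : ℝ)| * (2 * Real.sqrt (D : ℝ)) ≤ (D : ℝ) := by
          have h2s : 2 * Real.sqrt (D : ℝ) ≤ 4 * (p : ℝ) := by linarith [hp1]
          have hmul := mul_le_mul_of_nonneg_left h2s (abs_nonneg (c : ℝ))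
          linarith [h1, hmul]
        have h2s0 : (0 : ℝ) < 2 * Real.sqrt (D : ℝ) := by positivity
        have h3 : |(c : ℝ)| ≤ Real.sqrt (D : ℝ) / 2 := by
          rw [← mul_le_mul_iff_of_pos_right h2s0]
          exact key.trans (le_of_eq (by linear_combination -hsqD))
        have h4' : (0 : ℝ) ≤ ε * Real.sqrt (D : ℝ) := by positivity
        linarith [h3, h4']
      · have h1 : |(c : ℝ)| * (4 * (p : ℝ)) ≤ (p : ℝ) ^ 2 := by
          calc |(c : ℝ)| * (4 * (p : ℝ)) = |(c : ℝ) * (4 * (p : ℝ))| := by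
                rw [abs_mul, abs_of_pos (by positivity : (0:ℝ) < 4 * (p : ℝ))]
            _ = |(b : ℝ) ^ 2 - (D : ℝ)| := by
                rw [show (c : ℝ) * (4 * (p : ℝ)) = 4 * (p : ℝ) * (c : ℝ) from by ring, hcR]
            _ = (b : ℝ) ^ 2 - (D : ℝ) := by
                rw [abs_of_nonneg (by linarith)]
            _ ≤ (p : ℝ) ^ 2 := by nlinarith [hbR, hDpos, abs_nonneg (b : ℝ), sq_abs (b : ℝ)]
        have h2c : |(c : ℝ)| ≤ (p : ℝ) ^ 2 / (4 * (p : ℝ)) :=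
          (le_div_iff₀ (by positivity)).mpr h1
        have heq : (p : ℝ) ^ 2 / (4 * (p : ℝ)) = (p : ℝ) / 4 := by
          field_simp
        rw [heq] at h2c
        linarith [h2c, hp2, hppos]
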